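/- Let (Ω, 𝒫) be a probability space, X : Ω → ℝ with |X| ≤ 1 almost surely, Z : Ω → [0,∞) integrable, c > 0, S ∈ [0,1], and A an event such that Z ≥ c almost surely on A and |X| ≤ Z/c + 2·√S·√(Z/c) almost surely on the complement of A. Then 𝔼|X| ≤ 2·(𝔼[Z]/c) + 2·√S·√(𝔼[Z]/c). -/

import Mathlib

open MeasureTheory

theorem stmt_12 {Ω : Type*} [MeasurableSpace Ω] (μ : Measure Ω) [IsProbabilityMeasure μ]
    (X Z : Ω → ℝ) (hXmeas : Measurable X) (hZmeas : Measurable Z)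
    (hXbdd : ∀ᵐ ω ∂μ, |X ω| ≤ 1)
    (hZnonneg : ∀ᵐ ω ∂μ, 0 ≤ Z ω) (hZint : Integrable Z μ)
    (c : ℝ) (hc : 0 < c)
    (S : ℝ) (hS : S ∈ Set.Icc (0 : ℝ) 1)
    (A : Set Ω) (hA : MeasurableSet A)
    (hZA : ∀ᵐ ω ∂μ, ω ∈ A → c ≤ Z ω)
    (hXAc : ∀ᵐ ω ∂μ, ω ∉ A →
      |X ω| ≤ Z ω / c + 2 * Real.sqrt S * Real.sqrt (Z ω / c)) :
    ∫ ω, |X ω| ∂μ ≤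
      2 * ((∫ ω, Z ω ∂μ) / c) + 2 * Real.sqrt S * Real.sqrt ((∫ ω, Z ω ∂μ) / c) := by
  set g : Ω → ℝ := fun ω => Z ω / c with hg
  have hgmeas : Measurable g := hZmeas.div_const c
  have hgint : Integrable g μ := hZint.div_const c
  have hgnonneg : ∀ᵐ ω ∂μ, 0 ≤ g ω := by
    filter_upwards [hZnonneg] with ω h using div_nonneg h hc.le
  -- integrability of sqrt ∘ g
  have hsqrtint : Integrable (fun ω => Real.sqrt (g ω)) μ := by
    refine Integrable.mono' (g := fun ω => 1 + g ω)
      ((integrable_const 1).add hgint) (hgmeas.sqrt.aestronglyMeasurable) ?_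
    filter_upwards [hgnonneg] with ω h
    rw [Real.norm_eq_abs, abs_of_nonneg (Real.sqrt_nonneg _)]
    nlinarith [Real.sq_sqrt h, Real.sqrt_nonneg (g ω), sq_nonneg (Real.sqrt (g ω) - 1)]
  -- pointwise a.e. bound
  have hbound : ∀ᵐ ω ∂μ, |X ω| ≤ g ω + 2 * Real.sqrt S * Real.sqrt (g ω) := by
    filter_upwards [hXbdd, hZA, hXAc, hgnonneg] with ω h1 h2 h3 h4
    by_cases hω : ω ∈ A
    · have : (1 : ℝ) ≤ g ω := (one_le_div hc).mpr (h2 hω)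
      have hs : 0 ≤ 2 * Real.sqrt S * Real.sqrt (g ω) := by positivity
      linarith
    · exact h3 hω
  have hrhsint : Integrable (fun ω => g ω + 2 * Real.sqrt S * Real.sqrt (g ω)) μ :=
    hgint.add (hsqrtint.const_mul _)
  have hXint : Integrable (fun ω => |X ω|) μ := by
    refine Integrable.mono' (integrable_const 1) hXmeas.abs.aestronglyMeasurable ?_
    filter_upwards [hXbdd] with ω h using by rwa [Real.norm_eq_abs, abs_abs]
  have step1 : ∫ ω, |X ω| ∂μ ≤ ∫ ω, (g ω + 2 * Real.sqrt S * Real.sqrt (g ω)) ∂μ :=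
    integral_mono_ae hXint hrhsint hbound
  have hIg : 0 ≤ ∫ ω, g ω ∂μ := integral_nonneg_of_ae hgnonneg
  -- Cauchy-Schwarz: ∫ sqrt g ≤ sqrt (∫ g)
  have hCS : ∫ ω, Real.sqrt (g ω) ∂μ ≤ Real.sqrt (∫ ω, g ω ∂μ) := by
    have hmem : MemLp (fun ω => Real.sqrt (g ω)) (ENNReal.ofReal 2) μ := by
      rw [show ENNReal.ofReal 2 = 2 by norm_num]
      rw [memLp_two_iff_integrable_sq hgmeas.sqrt.aestronglyMeasurable]
      refine hgint.congr ?_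
      filter_upwards [hgnonneg] with ω h
      rw [sq, Real.mul_self_sqrt h]
    have hmem1 : MemLp (fun _ : Ω => (1 : ℝ)) (ENNReal.ofReal 2) μ := memLp_const 1
    have := integral_mul_le_Lp_mul_Lq_of_nonneg (by constructor <;> norm_num : Real.HolderConjugate 2 2)
      (f := fun ω => Real.sqrt (g ω)) (g := fun _ => (1:ℝ))
      (Filter.Eventually.of_forall fun ω => Real.sqrt_nonneg _)
      (Filter.Eventually.of_forall fun _ => zero_le_one) hmem hmem1
    simp only [mul_one] at this
    calc ∫ ω, Real.sqrt (g ω) ∂μ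
        ≤ (∫ ω, Real.sqrt (g ω) ^ (2:ℝ) ∂μ) ^ ((1:ℝ)/2) *
          (∫ _ : Ω, (1:ℝ) ^ (2:ℝ) ∂μ) ^ ((1:ℝ)/2) := this
      _ = Real.sqrt (∫ ω, g ω ∂μ) := by
          have h1 : (∫ ω, Real.sqrt (g ω) ^ (2:ℝ) ∂μ) = ∫ ω, g ω ∂μ := by
            refine integral_congr_ae ?_
            filter_upwards [hgnonneg] with ω h
            rw [Real.rpow_two, sq, Real.mul_self_sqrt h]
          have h2 : (∫ _ : Ω, (1:ℝ) ^ (2:ℝ) ∂μ) = 1 := by simp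
          rw [h1, h2, Real.one_rpow, mul_one, Real.sqrt_eq_rpow]
  have step2 : ∫ ω, (g ω + 2 * Real.sqrt S * Real.sqrt (g ω)) ∂μ
      = (∫ ω, g ω ∂μ) + 2 * Real.sqrt S * ∫ ω, Real.sqrt (g ω) ∂μ := by
    rw [integral_add hgint (hsqrtint.const_mul _), integral_const_mul]
  have hIeq : (∫ ω, g ω ∂μ) = (∫ ω, Z ω ∂μ) / c := by
    simp [hg, integral_div]
  have hSsqrt : 0 ≤ Real.sqrt S := Real.sqrt_nonneg S
  calc ∫ ω, |X ω| ∂μ ≤ (∫ ω, g ω ∂μ) + 2 * Real.sqrt S * ∫ ω, Real.sqrt (g ω) ∂μ := by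
        rw [← step2]; exact step1
    _ ≤ 2 * (∫ ω, g ω ∂μ) + 2 * Real.sqrt S * Real.sqrt (∫ ω, g ω ∂μ) := by
        nlinarith [mul_le_mul_of_nonneg_left hCS (by positivity : (0:ℝ) ≤ 2 * Real.sqrt S)]
    _ = 2 * ((∫ ω, Z ω ∂μ) / c) + 2 * Real.sqrt S * Real.sqrt ((∫ ω, Z ω ∂μ) / c) := by
        rw [hIeq]
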